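/- (Proposition 1 of the paper.) Let 𝕆 denote the octonions and for an octonion a let l_a denote left multiplication by a. Let a₁, …, a_n be unitary purely imaginary octonions and g = l_{a₁} ∘ ⋯ ∘ l_{a_n}. If g(1) = 1, then g is an algebra automorphism of the octonions, i.e. g(x·y) = g(x)·g(y) for all octonions x, y (so g belongs to G₂ = Aut(𝕆)). -/

import Mathlib

noncomputable section

/-- The octonions, realized as pairs of quaternions. -/
abbrev Octonion := Quaternion ℝ × Quaternion ℝ

/-- Octonion multiplication: (α₁,α₂)·(β₁,β₂) = (α₁β₁ − β̄₂α₂, β₂α₁ + α₂β̄₁). -/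
def omul (a b : Octonion) : Octonion :=
  (a.1 * b.1 - star b.2 * a.2, b.2 * a.1 + a.2 * star b.1)

/-- Octonion conjugation: (α₁,α₂)* = (ᾱ₁, −α₂). -/
def oconj (a : Octonion) : Octonion := (star a.1, -a.2)

/-- The unit octonion 1 = (1,0). -/
def oone : Octonion := ((1 : Quaternion ℝ), (0 : Quaternion ℝ))

/-- An octonion is purely imaginary if a + a* = 0. -/
def IsPurelyImaginary (a : Octonion) : Prop := a + oconj a = 0

/-- The squared Euclidean norm ‖(α₁,α₂)‖² = ‖α₁‖² + ‖α₂‖². -/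
def onormSq (a : Octonion) : ℝ := ‖a.1‖ ^ 2 + ‖a.2‖ ^ 2

/-- The Euclidean norm of an octonion. -/
def onorm (a : Octonion) : ℝ := Real.sqrt (onormSq a)

/-- An octonion is unitary if its Euclidean norm equals 1. -/
def IsUnitary (a : Octonion) : Prop := onorm a = 1

section Aux

set_option maxHeartbeats 4000000

lemma omul_neg_left (a b : Octonion) : omul (-a) b = -omul a b := by
  simp only [omul, Prod.fst_neg, Prod.snd_neg, neg_mul, mul_neg, Prod.neg_mk,
    Prod.mk.injEq]
  constructor <;> abel

lemma omul_neg_right (a b : Octonion) : omul a (-b) = -omul a b := by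
  simp only [omul, Prod.fst_neg, Prod.snd_neg, star_neg, neg_mul, mul_neg, Prod.neg_mk,
    Prod.mk.injEq]
  constructor <;> abel

lemma omul_oone_right (x : Octonion) : omul x oone = x := by
  simp [omul, oone]

lemma omul_oone_left (x : Octonion) : omul oone x = x := by
  simp [omul, oone]

lemma moufang (a x y : Octonion) :
    omul a (omul x (omul a y)) = omul (omul (omul a x) a) y := by
  obtain ⟨a1, a2⟩ := a; obtain ⟨x1, x2⟩ := x; obtain ⟨y1, y2⟩ := y
  simp only [omul, Prod.mk.injEq]
  constructor <;>
  · ext <;>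
      simp only [Quaternion.re_mul, Quaternion.imI_mul, Quaternion.imJ_mul,
        Quaternion.imK_mul, Quaternion.re_sub, Quaternion.imI_sub, Quaternion.imJ_sub,
        Quaternion.imK_sub, Quaternion.re_add, Quaternion.imI_add, Quaternion.imJ_add,
        Quaternion.imK_add, Quaternion.re_star, Quaternion.imI_star, Quaternion.imJ_star,
        Quaternion.imK_star] <;>
      ring

lemma leftalt (a y : Octonion) : omul a (omul a y) = omul (omul a a) y := by
  obtain ⟨a1, a2⟩ := a; obtain ⟨y1, y2⟩ := y
  simp only [omul, Prod.mk.injEq]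
  constructor <;>
  · ext <;>
      simp only [Quaternion.re_mul, Quaternion.imI_mul, Quaternion.imJ_mul,
        Quaternion.imK_mul, Quaternion.re_sub, Quaternion.imI_sub, Quaternion.imJ_sub,
        Quaternion.imK_sub, Quaternion.re_add, Quaternion.imI_add, Quaternion.imJ_add,
        Quaternion.imK_add, Quaternion.re_star, Quaternion.imI_star, Quaternion.imJ_star,
        Quaternion.imK_star] <;>
      ring

lemma oconj_eq_neg {a : Octonion} (hI : IsPurelyImaginary a) : oconj a = -a := by
  have := hI
  unfold IsPurelyImaginary at this
  linear_combination (norm := module) this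

lemma sq_eq_neg_one {a : Octonion} (hU : IsUnitary a) (hI : IsPurelyImaginary a) :
    omul a a = -oone := by
  have hstar : star a.1 = -a.1 := by
    have h1 := congrArg Prod.fst hI
    simp only [IsPurelyImaginary, oconj, Prod.fst_add, Prod.fst_zero] at h1 ⊢
    exact eq_neg_of_add_eq_zero_left (by rw [add_comm]; exact h1)
  have hn : ‖a.1‖ ^ 2 + ‖a.2‖ ^ 2 = 1 := Real.sqrt_eq_one.mp hU
  have hn1 : a.1 * a.1 = -((‖a.1‖ ^ 2 : ℝ) : Quaternion ℝ) := by
    have := Quaternion.star_mul_self a.1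
    rw [Quaternion.normSq_eq_norm_mul_self, ← sq, hstar, neg_mul,
      neg_eq_iff_eq_neg] at this
    exact this
  have hn2 : star a.2 * a.2 = ((‖a.2‖ ^ 2 : ℝ) : Quaternion ℝ) := by
    have := Quaternion.star_mul_self a.2
    rw [Quaternion.normSq_eq_norm_mul_self, ← sq] at this
    exact this
  have : omul a a = (a.1 * a.1 - star a.2 * a.2, a.2 * a.1 + a.2 * star a.1) := rfl
  rw [this, hn1, hn2, hstar]
  have : -((‖a.1‖ ^ 2 : ℝ) : Quaternion ℝ) - ((‖a.2‖ ^ 2 : ℝ) : Quaternion ℝ)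
      = -(((‖a.1‖ ^ 2 + ‖a.2‖ ^ 2 : ℝ)) : Quaternion ℝ) := by
    push_cast
    abel
  rw [this, hn]
  simp [oone, Prod.ext_iff]

lemma key (a x y : Octonion) (ha : omul a a = -oone) :
    omul a (omul x y) = omul (omul (omul a x) (-a)) (omul a y) := by
  have m := moufang a x (omul a y)
  rw [leftalt a y, ha, omul_neg_left, omul_oone_left, omul_neg_right,
    omul_neg_right] at m
  rw [omul_neg_right, omul_neg_left, ← m, neg_neg]

lemma main_lemma (l : List Octonion)
    (h : ∀ a ∈ l, IsUnitary a ∧ IsPurelyImaginary a) (x y : Octonion) :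
    l.foldr omul (omul x y)
      = omul (l.foldr (fun a z => omul (omul a z) (-a)) x) (l.foldr omul y) := by
  induction l with
  | nil => rfl
  | cons a t ih =>
    simp only [List.foldr_cons]
    rw [ih (fun b hb => h b (List.mem_cons_of_mem a hb)),
      key a _ _ (sq_eq_neg_one (h a (List.mem_cons_self (a := a) (l := t))).1
        (h a (List.mem_cons_self (a := a) (l := t))).2)]

end Aux

/-- Proposition 1: if g = l_{a₁} ∘ ⋯ ∘ l_{a_n} with the aᵢ unitary purely
imaginary octonions and g(1) = 1, then g is an automorphism of the octonion
algebra, i.e. g ∈ G₂. -/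
theorem proposition_one (l : List Octonion)
    (h : ∀ a ∈ l, IsUnitary a ∧ IsPurelyImaginary a)
    (hg : l.foldr omul oone = oone) (x y : Octonion) :
    l.foldr omul (omul x y) = omul (l.foldr omul x) (l.foldr omul y) := by
  have hx : ∀ z : Octonion,
      l.foldr (fun a w => omul (omul a w) (-a)) z = l.foldr omul z := by
    intro z
    have := main_lemma l h z oone
    rw [omul_oone_right, hg, omul_oone_right] at this
    exact this.symm
  rw [main_lemma l h x y, hx]
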